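/- If nonzero complex numbers a, c satisfy ℓa² + (ℓ+1)ac + ℓc² = 0 for some integer ℓ ≥ 2, then a/c is not a root of unity. -/

import Mathlib

theorem stmt_3 (a c : ℂ) (ha : a ≠ 0) (hc : c ≠ 0) (ℓ : ℤ) (hℓ : 2 ≤ ℓ)
    (h : (ℓ : ℂ) * a ^ 2 + ((ℓ : ℂ) + 1) * a * c + (ℓ : ℂ) * c ^ 2 = 0) :
    ¬ ∃ n : ℕ, 0 < n ∧ (a / c) ^ n = 1 := by
  rintro ⟨n, hn, hzn⟩
  set z : ℂ := a / c with hz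
  have hℓ0 : (ℓ : ℂ) ≠ 0 := by
    exact_mod_cast (by omega : ℓ ≠ 0)
  have hz0 : z ≠ 0 := div_ne_zero ha hc
  have heq : (ℓ : ℂ) * z ^ 2 + ((ℓ : ℂ) + 1) * z + ℓ = 0 := by
    have key : ((ℓ : ℂ) * z ^ 2 + ((ℓ : ℂ) + 1) * z + ℓ) * c ^ 2
        = (ℓ : ℂ) * a ^ 2 + ((ℓ : ℂ) + 1) * a * c + (ℓ : ℂ) * c ^ 2 := by
      rw [hz]; field_simp
    have := key.trans h
    rcases mul_eq_zero.mp this with h' | h'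
    · exact h'
    · exact absurd h' (pow_ne_zero 2 hc)
  -- z is integral over ℤ
  have hzint : IsIntegral ℤ z := by
    refine ⟨Polynomial.X ^ n - 1, ?_, ?_⟩
    · exact Polynomial.monic_X_pow_sub_C 1 (by omega)
    · simp [hzn]
  have hzinv : z⁻¹ = z ^ (n - 1) := by
    field_simp
    have h1 : z ^ (n - 1) * z = z ^ n := by
      rw [← pow_succ]; congr 1; omega
    rw [mul_comm, h1, hzn]
  have hsum_int : IsIntegral ℤ (z + z⁻¹) := by
    rw [hzinv]; exact hzint.add (hzint.pow _)
  have hsum : z + z⁻¹ = -(((ℓ : ℂ) + 1) / ℓ) := by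
    field_simp
    linear_combination heq
  -- transfer to ℚ
  set q : ℚ := -((ℓ + 1 : ℚ) / ℓ) with hq
  have hqℓ : (ℓ : ℚ) ≠ 0 := by exact_mod_cast (by omega : ℓ ≠ 0)
  have hcast : (algebraMap ℚ ℂ) q = z + z⁻¹ := by
    rw [eq_ratCast (algebraMap ℚ ℂ) q, hsum, hq]; push_cast; ring
  have hqint : IsIntegral ℤ q := by
    rw [← isIntegral_algebraMap_iff (algebraMap ℚ ℂ).injective, hcast]
    exact hsum_int
  obtain ⟨m, hm⟩ := IsIntegrallyClosed.isIntegral_iff.mp hqint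
  have : (m : ℚ) * ℓ = -(ℓ + 1) := by
    have : (m : ℚ) = q := hm
    rw [this, hq]
    field_simp
  have hmz : m * ℓ = -(ℓ + 1) := by exact_mod_cast this
  have hdvd : ℓ ∣ 1 := ⟨-(m + 1), by linarith [hmz]⟩
  have := Int.le_of_dvd one_pos hdvd
  omega
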